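/- Let Δ(λ) be the discriminant of x^5 + λ₄x³ + λ₆x² + λ₈x + λ₁₀ and let ℓ₆ = 10λ₁₀∂_{λ₄} - (4/5)λ₈λ₄∂_{λ₆} + (6λ₁₀λ₄ - (6/5)λ₈λ₆)∂_{λ₈} + (4λ₁₀λ₆ - (8/5)λ₈²)∂_{λ₁₀}. Then ℓ₆Δ = 4λ₆·Δ. -/

import Mathlib

/-- The discriminant of the quintic `x^5 + l4*x^3 + l6*x^2 + l8*x + l10`. -/
noncomputable def quinticDisc (l4 l6 l8 l10 : ℂ) : ℂ :=
  3125 * l10 ^ 4 - 3750 * l10 ^ 3 * l6 * l4 + 2000 * l10 ^ 2 * l8 ^ 2 * l4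
    + 2250 * l10 ^ 2 * l8 * l6 ^ 2 - 1600 * l10 * l8 ^ 3 * l6 + 256 * l8 ^ 5
    - 900 * l10 ^ 2 * l8 * l4 ^ 3 + 825 * l10 ^ 2 * l6 ^ 2 * l4 ^ 2
    + 560 * l10 * l8 ^ 2 * l6 * l4 ^ 2 - 630 * l10 * l8 * l6 ^ 3 * l4
    + 108 * l10 * l6 ^ 5 - 128 * l8 ^ 4 * l4 ^ 2 + 144 * l8 ^ 3 * l6 ^ 2 * l4
    - 27 * l8 ^ 2 * l6 ^ 4 + 108 * l10 ^ 2 * l4 ^ 5 - 72 * l10 * l8 * l6 * l4 ^ 4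
    + 16 * l10 * l6 ^ 3 * l4 ^ 3 + 16 * l8 ^ 3 * l4 ^ 4 - 4 * l8 ^ 2 * l6 ^ 2 * l4 ^ 3

lemma hasDerivAt_quintic (a b c d e f x : ℂ) :
    HasDerivAt (fun t : ℂ => a * t ^ 5 + b * t ^ 4 + c * t ^ 3 + d * t ^ 2 + e * t + f)
      (5 * a * x ^ 4 + 4 * b * x ^ 3 + 3 * c * x ^ 2 + 2 * d * x + e) x := by
  have h := ((((((hasDerivAt_pow 5 x).const_mul a).add
      ((hasDerivAt_pow 4 x).const_mul b)).add
      ((hasDerivAt_pow 3 x).const_mul c)).add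
      ((hasDerivAt_pow 2 x).const_mul d)).add
      ((hasDerivAt_id x).const_mul e)).add_const f
  refine h.congr_deriv ?_
  push_cast
  ring

lemma deriv_quintic (a b c d e f x : ℂ) :
    deriv (fun t : ℂ => a * t ^ 5 + b * t ^ 4 + c * t ^ 3 + d * t ^ 2 + e * t + f) x
      = 5 * a * x ^ 4 + 4 * b * x ^ 3 + 3 * c * x ^ 2 + 2 * d * x + e :=
  (hasDerivAt_quintic a b c d e f x).deriv

/-- the Zakalyukin vector field
ℓ₆ = 10λ₁₀∂_{λ₄} - (4/5)λ₈λ₄∂_{λ₆} + (6λ₁₀λ₄ - (6/5)λ₈λ₆)∂_{λ₈}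
  + (4λ₁₀λ₆ - (8/5)λ₈²)∂_{λ₁₀} satisfies ℓ₆Δ = 4λ₆·Δ. -/
theorem ell6_on_disc (l4 l6 l8 l10 : ℂ) :
    10 * l10 * deriv (fun t => quinticDisc t l6 l8 l10) l4
      - 4 / 5 * l8 * l4 * deriv (fun t => quinticDisc l4 t l8 l10) l6
      + (6 * l10 * l4 - 6 / 5 * l8 * l6) * deriv (fun t => quinticDisc l4 l6 t l10) l8
      + (4 * l10 * l6 - 8 / 5 * l8 ^ 2) * deriv (fun t => quinticDisc l4 l6 l8 t) l10
    = 4 * l6 * quinticDisc l4 l6 l8 l10 := by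
  have e4 : (fun t => quinticDisc t l6 l8 l10)
      = (fun t : ℂ => (108 * l10 ^ 2) * t ^ 5
          + (-72 * l10 * l8 * l6 + 16 * l8 ^ 3) * t ^ 4
          + (-900 * l10 ^ 2 * l8 + 16 * l10 * l6 ^ 3 - 4 * l8 ^ 2 * l6 ^ 2) * t ^ 3
          + (825 * l10 ^ 2 * l6 ^ 2 + 560 * l10 * l8 ^ 2 * l6 - 128 * l8 ^ 4) * t ^ 2
          + (-3750 * l10 ^ 3 * l6 + 2000 * l10 ^ 2 * l8 ^ 2 - 630 * l10 * l8 * l6 ^ 3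
              + 144 * l8 ^ 3 * l6 ^ 2) * t
          + (3125 * l10 ^ 4 + 2250 * l10 ^ 2 * l8 * l6 ^ 2 - 1600 * l10 * l8 ^ 3 * l6
              + 256 * l8 ^ 5 + 108 * l10 * l6 ^ 5 - 27 * l8 ^ 2 * l6 ^ 4)) := by
    funext t; simp only [quinticDisc]; ring
  have e6 : (fun t => quinticDisc l4 t l8 l10)
      = (fun t : ℂ => (108 * l10) * t ^ 5
          + (-27 * l8 ^ 2) * t ^ 4
          + (-630 * l10 * l8 * l4 + 16 * l10 * l4 ^ 3) * t ^ 3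
          + (2250 * l10 ^ 2 * l8 + 825 * l10 ^ 2 * l4 ^ 2 + 144 * l8 ^ 3 * l4
              - 4 * l8 ^ 2 * l4 ^ 3) * t ^ 2
          + (-3750 * l10 ^ 3 * l4 - 1600 * l10 * l8 ^ 3 + 560 * l10 * l8 ^ 2 * l4 ^ 2
              - 72 * l10 * l8 * l4 ^ 4) * t
          + (3125 * l10 ^ 4 + 2000 * l10 ^ 2 * l8 ^ 2 * l4 + 256 * l8 ^ 5
              - 900 * l10 ^ 2 * l8 * l4 ^ 3 - 128 * l8 ^ 4 * l4 ^ 2 + 108 * l10 ^ 2 * l4 ^ 5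
              + 16 * l8 ^ 3 * l4 ^ 4)) := by
    funext t; simp only [quinticDisc]; ring
  have e8 : (fun t => quinticDisc l4 l6 t l10)
      = (fun t : ℂ => (256 : ℂ) * t ^ 5
          + (-128 * l4 ^ 2) * t ^ 4
          + (-1600 * l10 * l6 + 144 * l6 ^ 2 * l4 + 16 * l4 ^ 4) * t ^ 3
          + (2000 * l10 ^ 2 * l4 + 560 * l10 * l6 * l4 ^ 2 - 27 * l6 ^ 4
              - 4 * l6 ^ 2 * l4 ^ 3) * t ^ 2
          + (2250 * l10 ^ 2 * l6 ^ 2 - 900 * l10 ^ 2 * l4 ^ 3 - 630 * l10 * l6 ^ 3 * l4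
              - 72 * l10 * l6 * l4 ^ 4) * t
          + (3125 * l10 ^ 4 - 3750 * l10 ^ 3 * l6 * l4 + 825 * l10 ^ 2 * l6 ^ 2 * l4 ^ 2
              + 108 * l10 * l6 ^ 5 + 108 * l10 ^ 2 * l4 ^ 5 + 16 * l10 * l6 ^ 3 * l4 ^ 3)) := by
    funext t; simp only [quinticDisc]; ring
  have e10 : (fun t => quinticDisc l4 l6 l8 t)
      = (fun t : ℂ => (0 : ℂ) * t ^ 5
          + (3125 : ℂ) * t ^ 4
          + (-3750 * l6 * l4) * t ^ 3
          + (2000 * l8 ^ 2 * l4 + 2250 * l8 * l6 ^ 2 - 900 * l8 * l4 ^ 3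
              + 825 * l6 ^ 2 * l4 ^ 2 + 108 * l4 ^ 5) * t ^ 2
          + (-1600 * l8 ^ 3 * l6 + 560 * l8 ^ 2 * l6 * l4 ^ 2 - 630 * l8 * l6 ^ 3 * l4
              + 108 * l6 ^ 5 - 72 * l8 * l6 * l4 ^ 4 + 16 * l6 ^ 3 * l4 ^ 3) * t
          + (256 * l8 ^ 5 - 128 * l8 ^ 4 * l4 ^ 2 + 144 * l8 ^ 3 * l6 ^ 2 * l4
              - 27 * l8 ^ 2 * l6 ^ 4 + 16 * l8 ^ 3 * l4 ^ 4 - 4 * l8 ^ 2 * l6 ^ 2 * l4 ^ 3)) := by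
    funext t; simp only [quinticDisc]; ring
  rw [e4, e6, e8, e10, deriv_quintic, deriv_quintic, deriv_quintic, deriv_quintic, quinticDisc]
  ring
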